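/- Let u = (a_1,...,a_n) and w = (b_1,...,b_s) be finite sequences of positive integers, let v be a block of k positive integers, and let 0 < ε < 1. If the cf-discrepancy of u with respect to v satisfies D_{v,n}(u) < ε and the cf-discrepancy of w satisfies D_{v,s}(w) < ε − (k−1)/s, then the concatenation uw satisfies D_{v,n+s}(uw) < ε. -/

import Mathlib

open MeasureTheory

/-- The continuant of a finite list of partial quotients: for `[a₁,...,aₙ]` it equals `qₙ`,
where `q₋₁ = 0`, `q₀ = 1`, `qₙ = aₙ qₙ₋₁ + qₙ₋₂`. -/
def contK : List ℕ → ℕ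
  | [] => 1
  | [a] => a
  | a :: b :: l => a * contK (b :: l) + contK l

/-- The value of the finite continued fraction `[a₁,...,aₙ] = 1/(a₁ + 1/(a₂ + ⋯ + 1/aₙ))`. -/
noncomputable def cfVal : List ℕ → ℝ
  | [] => 0
  | a :: l => 1 / (a + cfVal l)

/-- The list with its last entry incremented by one. -/
def succLast : List ℕ → List ℕ
  | [] => []
  | [a] => [a + 1]
  | a :: b :: l => a :: succLast (b :: l)

/-- The cf-ary interval `I_{[a₁,...,aₙ]}`: the open interval with endpoints
`[a₁,...,aₙ]` and `[a₁,...,aₙ+1]`, i.e. the set of numbers whose continued fraction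
expansion begins with `a₁,...,aₙ`. -/
noncomputable def cfInterval (u : List ℕ) : Set ℝ :=
  Set.Ioo (min (cfVal u) (cfVal (succLast u))) (max (cfVal u) (cfVal (succLast u)))

/-- The Gauss measure of a set: `μ(A) = (1/log 2) ∫_A dx/(1+x)`. -/
noncomputable def gaussM (A : Set ℝ) : ℝ := (1 / Real.log 2) * ∫ x in A, 1 / (1 + x)

/-- `|x|_v`: the number of occurrences of the block `v` as a consecutive subblock of `x`,
i.e. the number of indices `j` with `0 ≤ j ≤ |x| - |v|` such that `v` occurs in `x` at
position `j`. -/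
def occCount (x v : List ℕ) : ℕ :=
  ((Finset.range (x.length + 1 - v.length)).filter
    (fun j => (x.drop j).take v.length = v)).card

/-- The cf-discrepancy of the finite sequence `x` with respect to the block `v`:
`D_{v,|x|}(x) = | |x|_v/|x| - μ(I_v) |`. -/
noncomputable def cfDisc (v x : List ℕ) : ℝ :=
  |(occCount x v : ℝ) / (x.length : ℝ) - gaussM (cfInterval v)|

lemma occ_append_ge (u w v : List ℕ) (hv : v ≠ []) :
    occCount u v + occCount w v ≤ occCount (u ++ w) v := by
  classical
  have hk1 : 1 ≤ v.length := List.length_pos_iff.mpr hv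
  set k := v.length with hkdef
  set n := u.length with hndef
  set s := w.length with hsdef
  unfold occCount
  set Pu := (Finset.range (n + 1 - k)).filter (fun j => (u.drop j).take k = v) with hPu
  set Pw := (Finset.range (s + 1 - k)).filter (fun j => (w.drop j).take k = v) with hPw
  set Puw := (Finset.range ((u ++ w).length + 1 - k)).filter
      (fun j => ((u ++ w).drop j).take k = v) with hPuw
  have hlen : (u ++ w).length = n + s := by simp [List.length_append, hndef, hsdef]
  have hsub : Pu ∪ Pw.image (· + n) ⊆ Puw := by
    intro j hj
    simp only [Finset.mem_union, Finset.mem_image] at hj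
    rcases hj with hj | ⟨i, hi, rfl⟩
    · simp only [hPu, Finset.mem_filter, Finset.mem_range] at hj
      obtain ⟨hjr, hjm⟩ := hj
      have hjk : j + k ≤ n := by omega
      have hd : (u ++ w).drop j = u.drop j ++ w := List.drop_append_of_le_length (by omega)
      have ht : ((u ++ w).drop j).take k = (u.drop j).take k := by
        rw [hd]; exact List.take_append_of_le_length (by rw [List.length_drop]; omega)
      refine Finset.mem_filter.mpr ⟨Finset.mem_range.mpr ?_, by rw [ht]; exact hjm⟩
      omega
    · simp only [hPw, Finset.mem_filter, Finset.mem_range] at hi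
      obtain ⟨hir, him⟩ := hi
      have hd : (u ++ w).drop (i + n) = w.drop i := by
        rw [add_comm]; exact List.drop_length_add_append i
      refine Finset.mem_filter.mpr ⟨Finset.mem_range.mpr ?_, by rw [hd]; exact him⟩
      omega
  have hdisj : Disjoint Pu (Pw.image (· + n)) := by
    rw [Finset.disjoint_left]
    intro j hj hj'
    simp only [hPu, Finset.mem_filter, Finset.mem_range] at hj
    simp only [Finset.mem_image] at hj'
    obtain ⟨i, _, rfl⟩ := hj'
    omega
  calc Pu.card + Pw.card = Pu.card + (Pw.image (· + n)).card := by
        rw [Finset.card_image_of_injective _ (add_left_injective n)]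
    _ = (Pu ∪ Pw.image (· + n)).card := (Finset.card_union_of_disjoint hdisj).symm
    _ ≤ Puw.card := Finset.card_le_card hsub

lemma occ_append_le (u w v : List ℕ) (hv : v ≠ []) :
    occCount (u ++ w) v ≤ occCount u v + occCount w v + (v.length - 1) := by
  classical
  have hk1 : 1 ≤ v.length := List.length_pos_iff.mpr hv
  set k := v.length with hkdef
  set n := u.length with hndef
  set s := w.length with hsdef
  unfold occCount
  set Pu := (Finset.range (n + 1 - k)).filter (fun j => (u.drop j).take k = v) with hPu
  set Pw := (Finset.range (s + 1 - k)).filter (fun j => (w.drop j).take k = v) with hPw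
  set Puw := (Finset.range ((u ++ w).length + 1 - k)).filter
      (fun j => ((u ++ w).drop j).take k = v) with hPuw
  have hlen : (u ++ w).length = n + s := by simp [List.length_append, hndef, hsdef]
  have hsub : Puw ⊆ Pu ∪ Pw.image (· + n) ∪ Finset.Ico (n + 1 - k) n := by
    intro j hj
    simp only [hPuw, Finset.mem_filter, Finset.mem_range, hlen] at hj
    obtain ⟨hjr, hjm⟩ := hj
    simp only [Finset.mem_union, Finset.mem_image, Finset.mem_Ico]
    by_cases h1 : j + k ≤ n
    · left; left
      have hd : (u ++ w).drop j = u.drop j ++ w := List.drop_append_of_le_length (by omega)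
      have ht : ((u ++ w).drop j).take k = (u.drop j).take k := by
        rw [hd]; exact List.take_append_of_le_length (by rw [List.length_drop]; omega)
      refine Finset.mem_filter.mpr ⟨Finset.mem_range.mpr ?_, by rw [← ht]; exact hjm⟩
      omega
    · by_cases h2 : n ≤ j
      · left; right
        obtain ⟨i, rfl⟩ : ∃ i, j = n + i := ⟨j - n, by omega⟩
        refine ⟨i, ?_, by omega⟩
        have hd : (u ++ w).drop (n + i) = w.drop i := List.drop_length_add_append i
        refine Finset.mem_filter.mpr ⟨Finset.mem_range.mpr ?_, by rw [← hd]; exact hjm⟩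
        omega
      · right; omega
  calc Puw.card ≤ (Pu ∪ Pw.image (· + n) ∪ Finset.Ico (n + 1 - k) n).card :=
        Finset.card_le_card hsub
    _ ≤ (Pu ∪ Pw.image (· + n)).card + (Finset.Ico (n + 1 - k) n).card :=
        Finset.card_union_le _ _
    _ ≤ Pu.card + (Pw.image (· + n)).card + (Finset.Ico (n + 1 - k) n).card := by
        exact Nat.add_le_add_right (Finset.card_union_le _ _) _
    _ ≤ Pu.card + Pw.card + (k - 1) := by
        rw [Finset.card_image_of_injective _ (add_left_injective n), Nat.card_Ico]
        exact Nat.add_le_add_left (by omega) _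

theorem cfDisc_append (u w v : List ℕ) (ε : ℝ)
    (hu : ∀ x ∈ u, 0 < x) (hw : ∀ x ∈ w, 0 < x) (hv : ∀ x ∈ v, 0 < x)
    (hun : u ≠ []) (hwn : w ≠ []) (hvn : v ≠ [])
    (hε0 : 0 < ε) (hε1 : ε < 1)
    (h1 : cfDisc v u < ε)
    (h2 : cfDisc v w < ε - ((v.length : ℝ) - 1) / (w.length : ℝ)) :
    cfDisc v (u ++ w) < ε := by
  have hk1 : 1 ≤ v.length := List.length_pos_iff.mpr hvn
  have hn : 0 < u.length := List.length_pos_iff.mpr hun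
  have hs : 0 < w.length := List.length_pos_iff.mpr hwn
  have hge := occ_append_ge u w v hvn
  have hle := occ_append_le u w v hvn
  unfold cfDisc at h1 h2 ⊢
  set μ := gaussM (cfInterval v) with hμ
  set k : ℝ := (v.length : ℝ) with hk
  set N : ℝ := (u.length : ℝ) with hN
  set S : ℝ := (w.length : ℝ) with hS
  have hN0 : (0:ℝ) < N := by rw [hN]; exact_mod_cast hn
  have hS0 : (0:ℝ) < S := by rw [hS]; exact_mod_cast hs
  have hk0 : (1:ℝ) ≤ k := by rw [hk]; exact_mod_cast hk1
  set cu : ℝ := (occCount u v : ℝ) with hcu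
  set cw : ℝ := (occCount w v : ℝ) with hcw
  set c : ℝ := (occCount (u ++ w) v : ℝ) with hc
  have hge' : cu + cw ≤ c := by rw [hcu, hcw, hc]; exact_mod_cast hge
  have hle' : c ≤ cu + cw + (k - 1) := by
    rw [hcu, hcw, hc, hk]
    have : ((occCount (u ++ w) v : ℝ)) ≤ ((occCount u v + occCount w v + (v.length - 1) : ℕ) : ℝ) := by
      exact_mod_cast hle
    rw [Nat.cast_add, Nat.cast_add, Nat.cast_sub hk1] at this
    simpa using this
  have hlen : ((u ++ w).length : ℝ) = N + S := by
    rw [hN, hS]; push_cast [List.length_append]; ring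
  rw [hlen]
  set a : ℝ := cu / N - μ with ha
  set b : ℝ := cw / S - μ with hb
  have key : c / (N + S) - μ = (N * a + S * b + (c - cu - cw)) / (N + S) := by
    rw [ha, hb]; field_simp; ring
  rw [key, abs_div, abs_of_pos (by linarith : (0:ℝ) < N + S), div_lt_iff₀ (by linarith)]
  have hd0 : 0 ≤ c - cu - cw := by linarith
  have habs : |N * a + S * b + (c - cu - cw)| ≤ N * |a| + S * |b| + (c - cu - cw) := by
    calc |N * a + S * b + (c - cu - cw)| ≤ |N * a + S * b| + |c - cu - cw| := abs_add_le _ _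
      _ ≤ |N * a| + |S * b| + |c - cu - cw| := by linarith [abs_add_le (N * a) (S * b)]
      _ = N * |a| + S * |b| + (c - cu - cw) := by
          rw [abs_mul, abs_mul, abs_of_pos hN0, abs_of_pos hS0, abs_of_nonneg hd0]
  have h2' : S * |b| < S * ε - (k - 1) := by
    have := (mul_lt_mul_iff_right₀ hS0).mpr h2
    rwa [mul_sub, mul_div_cancel₀ _ (ne_of_gt hS0)] at this
  have h1' : N * |a| < N * ε := (mul_lt_mul_iff_right₀ hN0).mpr h1
  nlinarith [habs, h1', h2', hle', hd0]
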